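/- (Section 3.4, Example 2: the heteroskedasticity-adjusted representer reproduces the partially linear coefficient.) Let X be a random element of a measurable space 𝒳 and D a {0,1}-valued random variable on a probability space (Ω, P). Let v be a measurable real-valued function of (D, X) with c₁ ≤ v ≤ c₂ almost surely for constants 0 < c₁ ≤ c₂ < ∞ (interpreted as the conditional variance σ²(D, X)). Define m(X) := E[D/v | X] / E[1/v | X], assume κ := E[(D/v)·(1 − m(X))] > 0, and set C̄ := 1/κ and γ^#(D, X) := C̄·(D − m(X))/v. Then for every β ∈ ℝ and every measurable g: 𝒳 → ℝ with E[g(X)²] < ∞, E[γ^#(D, X)·(D·β + g(X))] = β. -/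

import Mathlib

open MeasureTheory ProbabilityTheory

/-- Section 3.4, Example 2: the heteroskedasticity-adjusted representer
reproduces the partially linear coefficient. With `m(X) = E[D/v|X]/E[1/v|X]`,
`κ = E[(D/v)(1 − m(X))] > 0`, `C̄ = 1/κ` and `γ# = C̄·(D − m(X))/v`, one has
`E[γ#·(D·β + g(X))] = β` for every `β ∈ ℝ` and square-integrable `g`. -/
theorem hetero_representer_reproduces_coefficient
    {Ω 𝒳 : Type*} [MeasurableSpace Ω] [MeasurableSpace 𝒳]
    (P : Measure Ω) [IsProbabilityMeasure P]
    (X : Ω → 𝒳) (hX : Measurable X)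
    (D : Ω → ℝ) (hD : Measurable D) (hD01 : ∀ ω, D ω = 0 ∨ D ω = 1)
    (vfun : ℝ × 𝒳 → ℝ) (hvmeas : Measurable vfun)
    (V : Ω → ℝ) (hV : V = fun ω => vfun (D ω, X ω))
    (c₁ c₂ : ℝ) (hc₁ : 0 < c₁) (hc₁₂ : c₁ ≤ c₂)
    (hVbound : ∀ᵐ ω ∂P, c₁ ≤ V ω ∧ V ω ≤ c₂)
    (m : Ω → ℝ)
    (hm : m = fun ω =>
      (P[fun ω' => D ω' / V ω' | MeasurableSpace.comap X inferInstance]) ω /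
      (P[fun ω' => 1 / V ω' | MeasurableSpace.comap X inferInstance]) ω)
    (κ : ℝ) (hκ : κ = ∫ ω, (D ω / V ω) * (1 - m ω) ∂P) (hκpos : 0 < κ)
    (Cbar : ℝ) (hCbar : Cbar = 1 / κ)
    (γsharp : Ω → ℝ) (hγsharp : γsharp = fun ω => Cbar * (D ω - m ω) / V ω) :
    ∀ (β : ℝ) (g : 𝒳 → ℝ), Measurable g → MemLp (fun ω => g (X ω)) 2 P →
      (∫ ω, γsharp ω * (D ω * β + g (X ω)) ∂P) = β := by
  intro β g hg hgL2
  have h𝔪 : MeasurableSpace.comap X inferInstance ≤ ‹MeasurableSpace Ω› := hX.comap_le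
  have hVmeas : Measurable V := by rw [hV]; exact hvmeas.comp (hD.prodMk hX)
  set f₁ : Ω → ℝ := fun ω => D ω / V ω with hf₁def
  set f₂ : Ω → ℝ := fun ω => 1 / V ω with hf₂def
  have hf₁meas : Measurable f₁ := hD.div hVmeas
  have hf₂meas : Measurable f₂ := measurable_const.div hVmeas
  have hc₂ : (0:ℝ) < c₂ := hc₁.trans_le hc₁₂
  -- a.e. bounds on f₁ and f₂
  have hf₁bd : ∀ᵐ ω ∂P, 0 ≤ f₁ ω ∧ f₁ ω ≤ 1 / c₁ := by
    filter_upwards [hVbound] with ω ⟨h1, h2⟩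
    have hVpos : 0 < V ω := hc₁.trans_le h1
    show 0 ≤ D ω / V ω ∧ D ω / V ω ≤ 1 / c₁
    rcases hD01 ω with h | h
    · rw [h]; constructor
      · simp
      · rw [zero_div]; positivity
    · rw [h]; exact ⟨by positivity, one_div_le_one_div_of_le hc₁ h1⟩
  have hf₂bd : ∀ᵐ ω ∂P, 1 / c₂ ≤ f₂ ω ∧ f₂ ω ≤ 1 / c₁ := by
    filter_upwards [hVbound] with ω ⟨h1, h2⟩
    have hVpos : 0 < V ω := hc₁.trans_le h1
    exact ⟨one_div_le_one_div_of_le hVpos h2, one_div_le_one_div_of_le hc₁ h1⟩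

  have hf₁int : Integrable f₁ P := by
    refine Integrable.mono' (integrable_const (1/c₁)) hf₁meas.aestronglyMeasurable ?_
    filter_upwards [hf₁bd] with ω ⟨h1, h2⟩
    rwa [Real.norm_eq_abs, abs_of_nonneg h1]
  have hf₂int : Integrable f₂ P := by
    refine Integrable.mono' (integrable_const (1/c₁)) hf₂meas.aestronglyMeasurable ?_
    filter_upwards [hf₂bd] with ω ⟨h1, h2⟩
    rw [Real.norm_eq_abs, abs_of_nonneg (le_trans (by positivity) h1)]; exact h2
  -- conditional expectations
  set E₁ : Ω → ℝ := P[f₁|MeasurableSpace.comap X inferInstance] with hE₁def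
  set E₂ : Ω → ℝ := P[f₂|MeasurableSpace.comap X inferInstance] with hE₂def
  have hmE : m = fun ω => E₁ ω / E₂ ω := hm
  -- bounds on E₁, E₂
  have hE₁bd : ∀ᵐ ω ∂P, 0 ≤ E₁ ω ∧ E₁ ω ≤ 1 / c₁ := by
    have h1 : P[(fun _ => (0:ℝ))|MeasurableSpace.comap X inferInstance] ≤ᵐ[P] E₁ := by
      refine condExp_mono (integrable_const 0) hf₁int ?_
      filter_upwards [hf₁bd] with ω h using h.1
    have h2 : E₁ ≤ᵐ[P] P[(fun _ => (1/c₁ : ℝ))|MeasurableSpace.comap X inferInstance] := by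
      refine condExp_mono hf₁int (integrable_const _) ?_
      filter_upwards [hf₁bd] with ω h using h.2
    have hc0 := condExp_const (μ := P) h𝔪 (0:ℝ)
    have hcc := condExp_const (μ := P) h𝔪 (1/c₁ : ℝ)
    rw [hc0] at h1; rw [hcc] at h2
    filter_upwards [h1, h2] with ω h1 h2 using ⟨h1, h2⟩
  have hE₂bd : ∀ᵐ ω ∂P, 1 / c₂ ≤ E₂ ω := by
    have h1 : P[(fun _ => (1/c₂:ℝ))|MeasurableSpace.comap X inferInstance] ≤ᵐ[P] E₂ := by
      refine condExp_mono (integrable_const _) hf₂int ?_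
      filter_upwards [hf₂bd] with ω h using h.1
    have hcc := condExp_const (μ := P) h𝔪 (1/c₂ : ℝ)
    rw [hcc] at h1; exact h1
  have hE₂pos : ∀ᵐ ω ∂P, 0 < E₂ ω := by
    filter_upwards [hE₂bd] with ω h using lt_of_lt_of_le (by positivity) h
  -- m bound and key identity m * E₂ = E₁ a.e.
  have hmbd : ∀ᵐ ω ∂P, ‖m ω‖ ≤ c₂ / c₁ := by
    filter_upwards [hE₁bd, hE₂bd, hE₂pos] with ω ⟨h1a, h1b⟩ h2 h2p
    rw [hmE, Real.norm_eq_abs, abs_of_nonneg (div_nonneg h1a h2p.le)]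
    rw [div_le_div_iff₀ h2p (by positivity : (0:ℝ) < c₁)]
    calc E₁ ω * c₁ ≤ (1/c₁) * c₁ := mul_le_mul_of_nonneg_right h1b hc₁.le
      _ = 1 := by field_simp
      _ ≤ c₂ * (1/c₂) := by rw [mul_one_div, div_self hc₂.ne']
      _ ≤ c₂ * E₂ ω := mul_le_mul_of_nonneg_left h2 hc₂.le
  have hkey : ∀ᵐ ω ∂P, m ω * E₂ ω = E₁ ω := by
    filter_upwards [hE₂pos] with ω h2p
    rw [hmE]; exact div_mul_cancel₀ _ h2p.ne'
  -- measurability of m wrt 𝔪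
  have hm_m𝔪 : Measurable[MeasurableSpace.comap X inferInstance] m := by
    rw [hmE]
    exact (stronglyMeasurable_condExp.measurable).div (stronglyMeasurable_condExp.measurable)
  have hm_sm : StronglyMeasurable[MeasurableSpace.comap X inferInstance] m :=
    hm_m𝔪.stronglyMeasurable
  have hm_meas : Measurable m := (hm_sm.mono h𝔪).measurable
  -- g ∘ X is 𝔪-measurable
  have hgX_m : Measurable[MeasurableSpace.comap X inferInstance] (fun ω => g (X ω)) :=
    hg.comp (fun s hs => ⟨s, hs, rfl⟩)
  have hgX_sm : StronglyMeasurable[MeasurableSpace.comap X inferInstance] (fun ω => g (X ω)) := hgX_m.stronglyMeasurable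
  have hgXint : Integrable (fun ω => g (X ω)) P :=
    (hgL2.mono_exponent (by norm_num)).integrable le_rfl
  -- the "key" trick: ∫ w * f = ∫ w * E[f|MeasurableSpace.comap X inferInstance] for w 𝔪-measurable
  have key : ∀ (w f : Ω → ℝ), StronglyMeasurable[MeasurableSpace.comap X inferInstance] w → Integrable f P →
      Integrable (fun ω => w ω * f ω) P →
      ∫ ω, w ω * f ω ∂P = ∫ ω, w ω * (P[f|MeasurableSpace.comap X inferInstance]) ω ∂P := by
    intro w f hw hf hwf
    have h1 : ∫ ω, w ω * f ω ∂P = ∫ ω, (P[fun ω => w ω * f ω|MeasurableSpace.comap X inferInstance]) ω ∂P :=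
      (integral_condExp h𝔪).symm
    have h2 : P[fun ω => w ω * f ω|MeasurableSpace.comap X inferInstance] =ᵐ[P] fun ω => w ω * (P[f|MeasurableSpace.comap X inferInstance]) ω :=
      condExp_mul_of_stronglyMeasurable_left hw hwf hf
    rw [h1]; exact integral_congr_ae h2
  -- Step A: ∫ γ# * D = Cbar * κ = 1
  have hγbd : ∀ᵐ ω ∂P, ‖γsharp ω‖ ≤ |Cbar| * (1 + c₂/c₁) * (1/c₁) := by
    filter_upwards [hVbound, hmbd] with ω ⟨h1, h2⟩ hmb
    have hVpos : 0 < V ω := hc₁.trans_le h1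
    rw [hγsharp]
    simp only [Real.norm_eq_abs] at *
    rw [abs_div, abs_mul]
    have hDm : |D ω - m ω| ≤ 1 + c₂/c₁ := by
      refine (abs_sub _ _).trans ?_
      have : |D ω| ≤ 1 := by rcases hD01 ω with h | h <;> simp [h]
      linarith
    have hVabs : |V ω| = V ω := abs_of_pos hVpos
    rw [hVabs, div_le_iff₀ hVpos]
    calc |Cbar| * |D ω - m ω| ≤ |Cbar| * (1 + c₂/c₁) :=
          mul_le_mul_of_nonneg_left hDm (abs_nonneg _)
      _ = |Cbar| * (1 + c₂/c₁) * (1/c₁) * c₁ := by field_simp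
      _ ≤ |Cbar| * (1 + c₂/c₁) * (1/c₁) * V ω := by
          refine mul_le_mul_of_nonneg_left h1 ?_
          have h0 : (0:ℝ) ≤ c₂/c₁ := by positivity
          positivity
  have hγmeas : Measurable γsharp := by
    rw [hγsharp]; exact ((measurable_const.mul (hD.sub hm_meas)).div hVmeas)
  have hγint : Integrable γsharp P :=
    Integrable.mono' (integrable_const _) hγmeas.aestronglyMeasurable hγbd
  have hγDint : Integrable (fun ω => γsharp ω * D ω) P := by
    refine Integrable.mono' (integrable_const (|Cbar| * (1 + c₂/c₁) * (1/c₁))) 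
      (hγmeas.mul hD).aestronglyMeasurable ?_
    filter_upwards [hγbd] with ω hb
    rw [norm_mul]
    have hD1 : ‖D ω‖ ≤ 1 := by rcases hD01 ω with h | h <;> simp [h]
    calc ‖γsharp ω‖ * ‖D ω‖ ≤ ‖γsharp ω‖ * 1 :=
          mul_le_mul_of_nonneg_left hD1 (norm_nonneg _)
      _ = ‖γsharp ω‖ := mul_one _
      _ ≤ _ := hb
  have stepA : ∫ ω, γsharp ω * D ω ∂P = 1 := by
    have heq : ∀ ω, γsharp ω * D ω = Cbar * (f₁ ω * (1 - m ω)) := by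
      intro ω
      rw [hγsharp]
      simp only [hf₁def]
      rcases hD01 ω with h | h <;> rw [h] <;> ring
    rw [integral_congr_ae (Filter.Eventually.of_forall heq), integral_const_mul]
    have : ∫ ω, f₁ ω * (1 - m ω) ∂P = κ := by rw [hκ]
    rw [this, hCbar, one_div, inv_mul_cancel₀ hκpos.ne']
  -- Step B: ∫ γ# * g(X) = 0
  have hγgint : Integrable (fun ω => γsharp ω * g (X ω)) P :=
    Integrable.bdd_mul hgXint hγmeas.aestronglyMeasurable hγbd
  have hf₁nb : ∀ᵐ ω ∂P, ‖f₁ ω‖ ≤ 1/c₁ := by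
    filter_upwards [hf₁bd] with ω h
    rw [Real.norm_eq_abs, abs_of_nonneg h.1]; exact h.2
  have hgf₁int : Integrable (fun ω => g (X ω) * f₁ ω) P := by
    have h := Integrable.bdd_mul hgXint hf₁meas.aestronglyMeasurable hf₁nb
    exact h.congr (Filter.Eventually.of_forall fun ω => mul_comm (f₁ ω) (g (X ω)))
  have hmgf₂int : Integrable (fun ω => (m ω * g (X ω)) * f₂ ω) P := by
    have hf₂b : ∀ᵐ ω ∂P, ‖f₂ ω‖ ≤ 1/c₁ := by
      filter_upwards [hf₂bd] with ω ⟨h1, h2⟩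
      rw [Real.norm_eq_abs, abs_of_nonneg (le_trans (by positivity) h1)]; exact h2
    have h1 : Integrable (fun ω => f₂ ω * (m ω * g (X ω))) P := by
      refine Integrable.bdd_mul ?_ hf₂meas.aestronglyMeasurable hf₂b
      exact Integrable.bdd_mul hgXint hm_meas.aestronglyMeasurable hmbd
    exact h1.congr (Filter.Eventually.of_forall fun ω => mul_comm _ _)
  have stepB : ∫ ω, γsharp ω * g (X ω) ∂P = 0 := by
    have heq : ∀ ω, γsharp ω * g (X ω) =
        Cbar * (g (X ω) * f₁ ω - (m ω * g (X ω)) * f₂ ω) := by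
      intro ω
      rw [hγsharp]
      simp only [hf₁def, hf₂def]
      field_simp
    rw [integral_congr_ae (Filter.Eventually.of_forall heq), integral_const_mul,
      integral_sub hgf₁int hmgf₂int]
    rw [key _ _ hgX_sm hf₁int hgf₁int, key (fun ω => m ω * g (X ω)) _ (hm_sm.mul hgX_sm) hf₂int hmgf₂int]
    have hint1 : Integrable (fun ω => g (X ω) * E₁ ω) P := by
      have hE₁b : ∀ᵐ ω ∂P, ‖E₁ ω‖ ≤ 1/c₁ := by
        filter_upwards [hE₁bd] with ω ⟨h1, h2⟩
        rwa [Real.norm_eq_abs, abs_of_nonneg h1]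
      exact (Integrable.bdd_mul hgXint 
        (stronglyMeasurable_condExp.mono h𝔪).aestronglyMeasurable hE₁b).congr
        (Filter.Eventually.of_forall fun ω => mul_comm _ _)
    have heq2 : (fun ω => (m ω * g (X ω)) * E₂ ω) =ᵐ[P] (fun ω => g (X ω) * E₁ ω) := by
      filter_upwards [hkey] with ω hk
      calc m ω * g (X ω) * E₂ ω = g (X ω) * (m ω * E₂ ω) := by ring
        _ = g (X ω) * E₁ ω := by rw [hk]
    rw [integral_congr_ae heq2, sub_self, mul_zero]
  -- conclude
  have hsplit : ∀ ω, γsharp ω * (D ω * β + g (X ω)) =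
      β * (γsharp ω * D ω) + γsharp ω * g (X ω) := fun ω => by ring
  rw [integral_congr_ae (Filter.Eventually.of_forall hsplit),
    integral_add ((hγDint.const_mul β)) hγgint, integral_const_mul, stepA, stepB,
    mul_one, add_zero]
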